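/- Let 0 ≤ T_* < T^* and let k : ℝ → ℝ be differentiable on the interval [T_*², (T^*)²] with k(s) + 2·s·k′(s) ≥ c₂ for every s ∈ [T_*², (T^*)²], where c₂ > 0. Then for all T, T̃ ∈ [T_*, T^*] one has (k(T²)·T − k(T̃²)·T̃)·(T − T̃) ≥ c₂·(T − T̃)². In particular the strong-monotonicity inequality (1.4) of the paper holds with C̃ = c₂. -/

import Mathlib

theorem strong_mono_aux
    (Tstar Tsup c₂ : ℝ) (hTstar : 0 ≤ Tstar) (hlt : Tstar < Tsup)
    (k : ℝ → ℝ)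
    (hdiff : ∀ s ∈ Set.Icc (Tstar ^ 2) (Tsup ^ 2), DifferentiableAt ℝ k s)
    (hell : ∀ s ∈ Set.Icc (Tstar ^ 2) (Tsup ^ 2), c₂ ≤ k s + 2 * s * deriv k s) :
    ∀ a ∈ Set.Icc Tstar Tsup, ∀ b ∈ Set.Icc Tstar Tsup, a < b →
      c₂ * (b - a) ≤ k (b ^ 2) * b - k (a ^ 2) * a := by
  intro a ha b hb hab
  have hsq : ∀ t ∈ Set.Icc a b, t ^ 2 ∈ Set.Icc (Tstar ^ 2) (Tsup ^ 2) := by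
    intro t ht
    have h1 : Tstar ≤ t := le_trans ha.1 ht.1
    have h2 : t ≤ Tsup := le_trans ht.2 hb.2
    constructor
    · exact pow_le_pow_left₀ hTstar h1 2
    · exact pow_le_pow_left₀ (le_trans hTstar h1) h2 2
  have hderiv : ∀ t ∈ Set.Icc a b,
      HasDerivAt (fun t => k (t ^ 2) * t)
        (k (t ^ 2) + 2 * t ^ 2 * deriv k (t ^ 2)) t := by
    intro t ht
    have hk := (hdiff _ (hsq t ht)).hasDerivAt
    have hpow := hasDerivAt_pow 2 t
    have h1 := HasDerivAt.comp_of_eq t hk hpow rfl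
    have h2 := h1.mul (hasDerivAt_id t)
    refine h2.congr_deriv ?_
    simp only [id_eq, Function.comp, pow_one, Nat.cast_ofNat]
    ring
  have hcont : ContinuousOn (fun t => k (t ^ 2) * t) (Set.Icc a b) :=
    fun t ht => (hderiv t ht).continuousAt.continuousWithinAt
  obtain ⟨c, hc, hceq⟩ := exists_hasDerivAt_eq_slope (fun t => k (t ^ 2) * t)
    (fun t => k (t ^ 2) + 2 * t ^ 2 * deriv k (t ^ 2)) hab hcont
    (fun x hx => hderiv x (Set.mem_Icc_of_Ioo hx))
  have hcm : c ∈ Set.Icc a b := Set.mem_Icc_of_Ioo hc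
  have hge : c₂ ≤ k (c ^ 2) + 2 * c ^ 2 * deriv k (c ^ 2) := hell _ (hsq c hcm)
  rw [hceq] at hge
  have hba : 0 < b - a := sub_pos.mpr hab
  calc c₂ * (b - a) ≤ (k (b ^ 2) * b - k (a ^ 2) * a) / (b - a) * (b - a) := by
        exact mul_le_mul_of_nonneg_right hge hba.le
    _ = k (b ^ 2) * b - k (a ^ 2) * a := div_mul_cancel₀ _ hba.ne'

theorem strong_monotonicity_of_plasticity
    (Tstar Tsup c₂ : ℝ) (hTstar : 0 ≤ Tstar) (hlt : Tstar < Tsup)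
    (k : ℝ → ℝ)
    (hdiff : ∀ s ∈ Set.Icc (Tstar ^ 2) (Tsup ^ 2), DifferentiableAt ℝ k s)
    (hc₂ : 0 < c₂)
    (hell : ∀ s ∈ Set.Icc (Tstar ^ 2) (Tsup ^ 2), c₂ ≤ k s + 2 * s * deriv k s) :
    ∀ T ∈ Set.Icc Tstar Tsup, ∀ T' ∈ Set.Icc Tstar Tsup,
      (k (T ^ 2) * T - k (T' ^ 2) * T') * (T - T') ≥ c₂ * (T - T') ^ 2 := by
  intro T hT T' hT'
  rcases lt_trichotomy T T' with h | h | h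
  · have := strong_mono_aux Tstar Tsup c₂ hTstar hlt k hdiff hell T hT T' hT' h
    have hpos : 0 < T' - T := sub_pos.mpr h
    nlinarith [sq_nonneg (T - T')]
  · simp [h]
  · have := strong_mono_aux Tstar Tsup c₂ hTstar hlt k hdiff hell T' hT' T hT h
    have hpos : 0 < T - T' := sub_pos.mpr h
    nlinarith [sq_nonneg (T - T')]
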